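/- arXiv:1702.08142 — 3 statements merged into one kernel-verified Lean document; each statement's English description precedes it below -/
import Mathlib

section
/- (Legendre dual, Theorem 1) For any strictly positive probability vector p on S, the supremum over all strictly positive probability vectors q of the quantity Σ_{x∈S⁺} θ_q(x) η_p(x) − ψ(q) equals the negative entropy Σ_{x∈S} p(x) log p(x), and this supremum is attained at q = p. -/
local instance {S : Type*} [PartialOrder S] [DecidableEq S]
    [DecidableRel ((· ≤ ·) : S → S → Prop)] :
    DecidableRel ((· < ·) : S → S → Prop) :=
  fun a b => decidable_of_iff (a ≤ b ∧ a ≠ b) lt_iff_le_and_ne.symm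

/-- `θ_p(x) = Σ_{s∈S} μ(s,x) log p(s)`. -/
noncomputable def thetaP {S : Type*} [Fintype S] (mu : S → S → ℤ) (p : S → ℝ) (x : S) : ℝ :=
  ∑ s : S, (mu s x : ℝ) * Real.log (p s)

/-- `η_p(x) = Σ_{s ≥ x} p(s)`. -/
noncomputable def etaP {S : Type*} [Fintype S] [PartialOrder S]
    [DecidableRel ((· ≤ ·) : S → S → Prop)] (p : S → ℝ) (x : S) : ℝ :=
  ∑ s ∈ Finset.univ.filter (fun s => x ≤ s), p s

section myaux
open Finset
variable {S : Type*} [Fintype S] [PartialOrder S] [DecidableEq S]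
  [DecidableRel ((· ≤ ·) : S → S → Prop)]

private lemma mu_interval_sum (mu : S → S → ℤ)
    (hmu_self : ∀ x : S, mu x x = 1)
    (hmu_lt : ∀ x y : S, x < y →
      mu x y = -∑ s ∈ Finset.univ.filter (fun s => x ≤ s ∧ s < y), mu x s)
    (hmu_nle : ∀ x y : S, ¬ x ≤ y → mu x y = 0)
    (s t : S) :
    (∑ x ∈ univ.filter (fun x => s ≤ x ∧ x ≤ t), mu s x) = if s = t then 1 else 0 := by
  by_cases hst : s ≤ t
  · rcases eq_or_lt_of_le hst with h | h
    · subst h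
      rw [if_pos rfl]
      have hf : univ.filter (fun x => s ≤ x ∧ x ≤ s) = {s} := by
        ext x
        simp only [mem_filter, mem_univ, true_and, mem_singleton]
        constructor
        · rintro ⟨h1, h2⟩; exact le_antisymm h2 h1
        · rintro rfl; exact ⟨le_refl _, le_refl _⟩
      rw [hf, Finset.sum_singleton, hmu_self]
    · rw [if_neg h.ne]
      have hsplit : univ.filter (fun x => s ≤ x ∧ x ≤ t)
          = insert t (univ.filter (fun x => s ≤ x ∧ x < t)) := by
        ext x
        simp only [mem_insert, mem_filter, mem_univ, true_and]
        constructor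
        · rintro ⟨h1, h2⟩
          rcases eq_or_lt_of_le h2 with h3 | h3
          · exact Or.inl h3
          · exact Or.inr ⟨h1, h3⟩
        · rintro (rfl | ⟨h1, h2⟩)
          · exact ⟨hst, le_refl _⟩
          · exact ⟨h1, h2.le⟩
      rw [hsplit, Finset.sum_insert (by simp), hmu_lt s t h]
      exact neg_add_cancel _
  · rw [if_neg (by rintro rfl; exact hst (le_refl _))]
    apply Finset.sum_eq_zero
    intro x hx
    simp only [mem_filter, mem_univ, true_and] at hx
    by_cases hsx : s ≤ x
    · exact absurd (hsx.trans hx.2) hst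
    · exact hmu_nle s x hsx

private lemma mu_eta (mu : S → S → ℤ)
    (hmu_self : ∀ x : S, mu x x = 1)
    (hmu_lt : ∀ x y : S, x < y →
      mu x y = -∑ s ∈ Finset.univ.filter (fun s => x ≤ s ∧ s < y), mu x s)
    (hmu_nle : ∀ x y : S, ¬ x ≤ y → mu x y = 0)
    (p : S → ℝ) (s : S) :
    ∑ x : S, (mu s x : ℝ) * etaP p x = p s := by
  have key : ∀ t : S, (∑ x ∈ univ.filter (fun x => x ≤ t), (mu s x : ℝ))
      = if s = t then 1 else 0 := by
    intro t
    have h1 : (∑ x ∈ univ.filter (fun x => x ≤ t), mu s x)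
        = ∑ x ∈ univ.filter (fun x => s ≤ x ∧ x ≤ t), mu s x := by
      rw [Finset.sum_filter, Finset.sum_filter]
      apply Finset.sum_congr rfl
      intro x _
      by_cases h2 : x ≤ t
      · by_cases h3 : s ≤ x
        · simp [h2, h3]
        · simp [h2, h3, hmu_nle s x h3]
      · simp [h2]
    have h2 : ((∑ x ∈ univ.filter (fun x => x ≤ t), mu s x : ℤ) : ℝ)
        = if s = t then 1 else 0 := by
      rw [h1, mu_interval_sum mu hmu_self hmu_lt hmu_nle s t]
      split <;> norm_num
    rw [← h2, Int.cast_sum]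
  calc ∑ x : S, (mu s x : ℝ) * etaP p x
      = ∑ x : S, ∑ t ∈ univ.filter (fun t => x ≤ t), (mu s x : ℝ) * p t := by
        apply Finset.sum_congr rfl
        intro x _
        rw [etaP, Finset.mul_sum]
    _ = ∑ x : S, ∑ t : S, if x ≤ t then (mu s x : ℝ) * p t else 0 := by
        apply Finset.sum_congr rfl; intro x _; rw [Finset.sum_filter]
    _ = ∑ t : S, ∑ x : S, if x ≤ t then (mu s x : ℝ) * p t else 0 := Finset.sum_comm
    _ = ∑ t : S, p t * ∑ x ∈ univ.filter (fun x => x ≤ t), (mu s x : ℝ) := by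
        apply Finset.sum_congr rfl
        intro t _
        rw [Finset.mul_sum, Finset.sum_filter]
        apply Finset.sum_congr rfl
        intro x _
        split <;> ring
    _ = p s := by
        simp [key, mul_ite]
end myaux

private lemma gibbs {S : Type*} [Fintype S] (p q : S → ℝ)
    (hp : ∀ x, 0 < p x) (hq : ∀ x, 0 < q x)
    (hpsum : ∑ x : S, p x = 1) (hqsum : ∑ x : S, q x = 1) :
    ∑ x : S, p x * Real.log (q x) ≤ ∑ x : S, p x * Real.log (p x) := by
  have h : ∑ x : S, (p x * Real.log (q x) - p x * Real.log (p x)) ≤ 0 := by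
    calc ∑ x : S, (p x * Real.log (q x) - p x * Real.log (p x))
        = ∑ x : S, p x * Real.log (q x / p x) := by
          apply Finset.sum_congr rfl
          intro x _
          rw [Real.log_div (hq x).ne' (hp x).ne']
          ring
      _ ≤ ∑ x : S, p x * (q x / p x - 1) := by
          apply Finset.sum_le_sum
          intro x _
          exact mul_le_mul_of_nonneg_left
            (Real.log_le_sub_one_of_pos (div_pos (hq x) (hp x))) (hp x).le
      _ = ∑ x : S, (q x - p x) := by
          apply Finset.sum_congr rfl
          intro x _
          have := (hp x).ne'
          field_simp
      _ = 0 := by rw [Finset.sum_sub_distrib, hpsum, hqsum, sub_self]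
  rw [Finset.sum_sub_distrib] at h
  linarith


/-- (Legendre dual) For any strictly positive probability vector `p` on `S`, the supremum over
all strictly positive probability vectors `q` of `Σ_{x∈S⁺} θ_q(x) η_p(x) − ψ(q)`
(where `ψ(q) = −log q(⊥)`) equals the negative entropy `Σ_{x∈S} p(x) log p(x)`,
and it is attained at `q = p`. -/
theorem legendre_dual_negentropy {S : Type*} [Fintype S] [PartialOrder S] [OrderBot S]
    [DecidableEq S] [DecidableRel ((· ≤ ·) : S → S → Prop)]
    (mu : S → S → ℤ)
    (hmu_self : ∀ x : S, mu x x = 1)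
    (hmu_lt : ∀ x y : S, x < y →
      mu x y = -∑ s ∈ Finset.univ.filter (fun s => x ≤ s ∧ s < y), mu x s)
    (hmu_nle : ∀ x y : S, ¬ x ≤ y → mu x y = 0)
    (p : S → ℝ)
    (hp : ∀ x, p x ∈ Set.Ioo (0 : ℝ) 1) (hpsum : ∑ x : S, p x = 1) :
    IsGreatest
      {v : ℝ | ∃ q : S → ℝ, (∀ x, q x ∈ Set.Ioo (0 : ℝ) 1) ∧ (∑ x : S, q x = 1) ∧
        v = (∑ x : {x : S // x ≠ ⊥}, thetaP mu q (x : S) * etaP p (x : S)) - (-Real.log (q ⊥))}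
      (∑ x : S, p x * Real.log (p x)) ∧
    (∑ x : {x : S // x ≠ ⊥}, thetaP mu p (x : S) * etaP p (x : S)) - (-Real.log (p ⊥))
      = ∑ x : S, p x * Real.log (p x) := by
  classical
  have key : ∀ q : S → ℝ, (∀ x, 0 < q x) →
      (∑ x : {x : S // x ≠ ⊥}, thetaP mu q (x : S) * etaP p (x : S)) - (-Real.log (q ⊥))
        = ∑ s : S, p s * Real.log (q s) := by
    intro q hq
    have h_all : ∑ x : S, thetaP mu q x * etaP p x = ∑ s : S, p s * Real.log (q s) := by
      calc ∑ x : S, thetaP mu q x * etaP p x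
          = ∑ x : S, ∑ s : S, (mu s x : ℝ) * Real.log (q s) * etaP p x := by
            apply Finset.sum_congr rfl; intro x _; rw [thetaP, Finset.sum_mul]
        _ = ∑ s : S, ∑ x : S, (mu s x : ℝ) * Real.log (q s) * etaP p x := Finset.sum_comm
        _ = ∑ s : S, Real.log (q s) * ∑ x : S, (mu s x : ℝ) * etaP p x := by
            apply Finset.sum_congr rfl; intro s _
            rw [Finset.mul_sum]; apply Finset.sum_congr rfl; intro x _; ring
        _ = ∑ s : S, p s * Real.log (q s) := by
            apply Finset.sum_congr rfl; intro s _
            rw [mu_eta mu hmu_self hmu_lt hmu_nle p s]; ring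
    have h_bt : thetaP mu q ⊥ = Real.log (q ⊥) := by
      rw [thetaP, Finset.sum_eq_single ⊥]
      · rw [hmu_self]; norm_num
      · intro s _ hs
        rw [hmu_nle s ⊥ (fun h => hs (le_bot_iff.mp h))]; norm_num
      · simp
    have h_be : etaP p ⊥ = 1 := by
      rw [etaP]
      have hu : Finset.univ.filter (fun s => (⊥ : S) ≤ s) = Finset.univ :=
        Finset.filter_true_of_mem (fun x _ => bot_le)
      rw [hu, hpsum]
    have h_sub : (∑ x : {x : S // x ≠ ⊥}, thetaP mu q (x : S) * etaP p (x : S))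
        = (∑ x : S, thetaP mu q x * etaP p x) - thetaP mu q ⊥ * etaP p ⊥ := by
      rw [← Finset.sum_subtype (Finset.univ.erase (⊥ : S)) (by simp)
        (fun x => thetaP mu q x * etaP p x)]
      have := Finset.sum_erase_add Finset.univ (fun x => thetaP mu q x * etaP p x)
        (Finset.mem_univ (⊥ : S))
      linarith
    rw [h_sub, h_all, h_bt, h_be]
    ring
  have hmem : (∑ x : S, p x * Real.log (p x)) ∈
      {v : ℝ | ∃ q : S → ℝ, (∀ x, q x ∈ Set.Ioo (0 : ℝ) 1) ∧ (∑ x : S, q x = 1) ∧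
        v = (∑ x : {x : S // x ≠ ⊥}, thetaP mu q (x : S) * etaP p (x : S)) - (-Real.log (q ⊥))} :=
    ⟨p, hp, hpsum, (key p (fun x => (hp x).1)).symm⟩
  refine ⟨⟨hmem, ?_⟩, key p (fun x => (hp x).1)⟩
  rintro v ⟨q, hq, hqsum, rfl⟩
  rw [key q (fun x => (hq x).1)]
  exact gibbs p q (fun x => (hp x).1) (fun x => (hq x).1) hpsum hqsum
end

section
/- (Jacobian matrix for matrix balancing) Let n ≥ 1 and let p = (p_{ij}) be the probability matrix determined by θ ∈ ℝ^{S⁺} via p_θ. Then for all (i,j), (i',j') ∈ S⁺, the partial derivative of η with respect to θ satisfies ∂η_θ(i,j)/∂θ(i',j') = η_θ(max(i,i'), max(j,j')) − η_θ(i,j) η_θ(i',j'). -/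
/-- `ψ(θ) = log Σ_{x∈S} exp(Σ_{s∈S⁺, s≤x} θ(s))` on `S = [n]×[n]` ordered componentwise,
with least element `⊥ = (1,1)` and `S⁺ = S \ {⊥}`. -/
noncomputable def psi {n : ℕ} [NeZero n]
    (θ : {x : Fin n × Fin n // x ≠ ⊥} → ℝ) : ℝ :=
  Real.log (∑ x : Fin n × Fin n,
    Real.exp (∑ s : {x : Fin n × Fin n // x ≠ ⊥}, if (s : Fin n × Fin n) ≤ x then θ s else 0))

/-- `p_θ(x) = exp(Σ_{s∈S⁺, s≤x} θ(s) − ψ(θ))`. -/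
noncomputable def pTheta {n : ℕ} [NeZero n]
    (θ : {x : Fin n × Fin n // x ≠ ⊥} → ℝ) (x : Fin n × Fin n) : ℝ :=
  Real.exp ((∑ s : {x : Fin n × Fin n // x ≠ ⊥}, if (s : Fin n × Fin n) ≤ x then θ s else 0)
    - psi θ)

/-- `η_θ(i,j) = Σ_{i'≥i, j'≥j} p_θ(i',j')`. -/
noncomputable def etaTheta {n : ℕ} [NeZero n]
    (θ : {x : Fin n × Fin n // x ≠ ⊥} → ℝ) (x : Fin n × Fin n) : ℝ :=
  ∑ s ∈ Finset.univ.filter (fun s => x ≤ s), pTheta θ s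

set_option maxHeartbeats 1000000 in
/-- (Jacobian matrix for matrix balancing) For all `(i,j), (i',j') ∈ S⁺`,
`∂η_θ(i,j)/∂θ(i',j') = η_θ(max(i,i'), max(j,j')) − η_θ(i,j) η_θ(i',j')`. -/
theorem jacobian_matrix_balancing {n : ℕ} [NeZero n]
    (θ : {x : Fin n × Fin n // x ≠ ⊥} → ℝ) (x x' : {x : Fin n × Fin n // x ≠ ⊥}) :
    HasDerivAt (fun t => etaTheta (Function.update θ x' t) (x : Fin n × Fin n))
      (etaTheta θ (max (x : Fin n × Fin n).1 (x' : Fin n × Fin n).1,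
          max (x : Fin n × Fin n).2 (x' : Fin n × Fin n).2)
        - etaTheta θ (x : Fin n × Fin n) * etaTheta θ (x' : Fin n × Fin n))
      (θ x') := by
  classical
  set t₀ := θ x' with ht₀
  set c : Fin n × Fin n → ℝ := fun y =>
    ∑ s ∈ Finset.univ.erase x', if (s : Fin n × Fin n) ≤ y then θ s else 0 with hc
  set b : Fin n × Fin n → ℝ := fun y => if (x' : Fin n × Fin n) ≤ y then 1 else 0 with hb
  have hg : ∀ (t : ℝ) (y : Fin n × Fin n),
      (∑ s : {x : Fin n × Fin n // x ≠ ⊥},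
        if (s : Fin n × Fin n) ≤ y then Function.update θ x' t s else 0)
      = c y + b y * t := by
    intro t y
    rw [← Finset.sum_erase_add _ _ (Finset.mem_univ x')]
    congr 1
    · exact Finset.sum_congr rfl fun s hs => by
        rw [Function.update_of_ne (Finset.ne_of_mem_erase hs)]
    · simp only [Function.update_self, hb]
      split_ifs <;> ring
  have hDpos : ∀ t : ℝ, 0 < ∑ z : Fin n × Fin n, Real.exp (c z + b z * t) := by
    intro t
    exact Finset.sum_pos (fun z _ => Real.exp_pos _) Finset.univ_nonempty
  have hp : ∀ (t : ℝ) (y : Fin n × Fin n), pTheta (Function.update θ x' t) y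
      = Real.exp (c y + b y * t) / ∑ z : Fin n × Fin n, Real.exp (c z + b z * t) := by
    intro t y
    unfold pTheta psi
    simp only [hg]
    rw [Real.exp_sub, Real.exp_log (hDpos t)]
  have he : ∀ (t : ℝ) (y : Fin n × Fin n), etaTheta (Function.update θ x' t) y
      = (∑ s ∈ Finset.univ.filter (fun s => y ≤ s), Real.exp (c s + b s * t))
        / ∑ z : Fin n × Fin n, Real.exp (c z + b z * t) := by
    intro t y
    unfold etaTheta
    rw [Finset.sum_div]
    exact Finset.sum_congr rfl fun s _ => hp t s
  have hself : Function.update θ x' t₀ = θ := Function.update_eq_self x' θ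
  have heθ : ∀ y : Fin n × Fin n, etaTheta θ y
      = (∑ s ∈ Finset.univ.filter (fun s => y ≤ s), Real.exp (c s + b s * t₀))
        / ∑ z : Fin n × Fin n, Real.exp (c z + b z * t₀) := by
    intro y; rw [← hself]; exact he t₀ y
  -- numerator and denominator
  set N : ℝ → ℝ := fun t =>
    ∑ s ∈ Finset.univ.filter (fun s => (x : Fin n × Fin n) ≤ s), Real.exp (c s + b s * t)
    with hN
  set D : ℝ → ℝ := fun t => ∑ z : Fin n × Fin n, Real.exp (c z + b z * t) with hD
  have hfun : (fun t => etaTheta (Function.update θ x' t) (x : Fin n × Fin n))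
      = fun t => N t / D t := funext fun t => he t _
  have hlin : ∀ (y : Fin n × Fin n), HasDerivAt (fun t => c y + b y * t) (b y) t₀ := by
    intro y
    simpa using (hasDerivAt_id t₀).const_mul (b y) |>.const_add (c y)
  have hexp : ∀ (y : Fin n × Fin n),
      HasDerivAt (fun t => Real.exp (c y + b y * t)) (b y * Real.exp (c y + b y * t₀)) t₀ := by
    intro y
    simpa [mul_comm, Function.comp_def] using (Real.hasDerivAt_exp (c y + b y * t₀)).comp t₀ (hlin y)
  have hN' : HasDerivAt N
      (∑ s ∈ Finset.univ.filter (fun s => (x : Fin n × Fin n) ≤ s),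
        b s * Real.exp (c s + b s * t₀)) t₀ :=
    HasDerivAt.fun_sum fun s _ => hexp s
  have hD' : HasDerivAt D (∑ z : Fin n × Fin n, b z * Real.exp (c z + b z * t₀)) t₀ :=
    HasDerivAt.fun_sum fun z _ => hexp z
  have hDne : D t₀ ≠ 0 := ne_of_gt (hDpos t₀)
  have hdiv := hN'.div hD' hDne
  rw [hfun]
  convert hdiv using 1
  case e'_4 => rfl
  case e'_5 => rfl
  case e'_8 => rfl
  -- identify the weighted sums with eta values
  have hbsum : ∀ (u : Finset (Fin n × Fin n)),
      ∑ s ∈ u, b s * Real.exp (c s + b s * t₀)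
      = ∑ s ∈ u.filter (fun s => (x' : Fin n × Fin n) ≤ s), Real.exp (c s + b s * t₀) := by
    intro u
    rw [Finset.sum_filter]
    exact Finset.sum_congr rfl fun s _ => by
      simp only [hb]; split_ifs <;> ring
  have hDsum : ∑ z : Fin n × Fin n, b z * Real.exp (c z + b z * t₀)
      = ∑ s ∈ Finset.univ.filter (fun s => (x' : Fin n × Fin n) ≤ s),
          Real.exp (c s + b s * t₀) := hbsum _
  have hNsum : ∑ s ∈ Finset.univ.filter (fun s => (x : Fin n × Fin n) ≤ s),
        b s * Real.exp (c s + b s * t₀)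
      = ∑ s ∈ Finset.univ.filter (fun s =>
          ((max (x : Fin n × Fin n).1 (x' : Fin n × Fin n).1,
            max (x : Fin n × Fin n).2 (x' : Fin n × Fin n).2) : Fin n × Fin n) ≤ s),
          Real.exp (c s + b s * t₀) := by
    rw [hbsum, Finset.filter_filter]
    apply Finset.sum_congr _ fun _ _ => rfl
    apply Finset.filter_congr
    intro s _
    simp only [Prod.le_def, Prod.mk_le_mk, max_le_iff]
    tauto
  rw [heθ, heθ, heθ]
  rw [hNsum, hDsum] at hdiv ⊢
  have haux : ∀ M A B Dv : ℝ, Dv ≠ 0 →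
      M / Dv - A / Dv * (B / Dv) = (M * Dv - A * B) / Dv ^ 2 := by
    intro M A B Dv h; field_simp
  exact haux _ _ _ _ hDne
end

section
/- (Existence and uniqueness of matrix balancing for positive matrices) Let A ∈ ℝ^{n×n} be a matrix with all entries strictly positive. Then there exist strictly positive vectors r, s ∈ ℝ^n such that the matrix A' with entries a'_{ij} = a_{ij} r_i s_j is doubly stochastic (every row and every column of A' sums to one), and the doubly stochastic matrix A' obtained in this way is unique. -/
open Finset Matrix

namespace MB
variable {n : ℕ}

/-- The potential function. -/
noncomputable def F (A : Matrix (Fin n) (Fin n) ℝ) (r s : Fin n → ℝ) : ℝ :=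
  (∑ i, ∑ j, A i j * r i * s j) - (∑ i, Real.log (r i)) - (∑ j, Real.log (s j))

lemma sum_update (g : Fin n → ℝ → ℝ) (r : Fin n → ℝ) (i : Fin n) (t : ℝ) :
    ∑ i', g i' (Function.update r i t i')
      = g i t + ∑ i' ∈ Finset.univ.erase i, g i' (r i') := by
  rw [← Finset.sum_erase_add _ _ (Finset.mem_univ i), Function.update_self, add_comm]
  congr 1
  exact Finset.sum_congr rfl fun x hx => by
    rw [Function.update_of_ne (Finset.ne_of_mem_erase hx)]

lemma local_min_log (c t0 : ℝ) (ht0 : 0 < t0)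
    (h : ∀ t, 0 < t → c * t0 - Real.log t0 ≤ c * t - Real.log t) : c * t0 = 1 := by
  have hloc : IsLocalMin (fun t => c * t - Real.log t) t0 :=
    Filter.eventually_of_mem (Ioi_mem_nhds ht0) (fun t ht => h t ht)
  have hd : HasDerivAt (fun t => c * t - Real.log t) (c - t0⁻¹) t0 := by
    have h := ((hasDerivAt_id t0).const_mul c).sub (Real.hasDerivAt_log ht0.ne')
    simp only [mul_one] at h
    exact h
  have h0 := hloc.hasDerivAt_eq_zero hd
  have : c = t0⁻¹ := by linarith
  rw [this]; field_simp

lemma F_update (A : Matrix (Fin n) (Fin n) ℝ) (r s : Fin n → ℝ) (i : Fin n) (t : ℝ) :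
    F A (Function.update r i t) s
      = (∑ j, A i j * s j) * t - Real.log t
        + ((∑ i' ∈ Finset.univ.erase i, ∑ j, A i' j * r i' * s j)
           - (∑ i' ∈ Finset.univ.erase i, Real.log (r i')) - ∑ j, Real.log (s j)) := by
  unfold F
  rw [sum_update (fun i' x => ∑ j, A i' j * x * s j) r i t,
      sum_update (fun _ x => Real.log x) r i t]
  have : ∑ j, A i j * t * s j = (∑ j, A i j * s j) * t := by
    rw [Finset.sum_mul]; exact Finset.sum_congr rfl fun j _ => by ring
  rw [this]; ring

/-- First-order condition: at a global minimum of `F` over the positive orthant,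
all row sums of the balanced matrix are 1. -/
lemma rows_eq_one (A : Matrix (Fin n) (Fin n) ℝ) (r s : Fin n → ℝ)
    (hr : ∀ i, 0 < r i) (hs : ∀ j, 0 < s j)
    (hmin : ∀ r' s', (∀ i, 0 < r' i) → (∀ j, 0 < s' j) → F A r s ≤ F A r' s') :
    ∀ i, ∑ j, A i j * r i * s j = 1 := by
  intro i
  set c := ∑ j, A i j * s j with hc
  have key : ∀ t, 0 < t → c * (r i) - Real.log (r i) ≤ c * t - Real.log t := by
    intro t ht
    have hpos : ∀ i', 0 < Function.update r i t i' := by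
      intro i'
      rcases eq_or_ne i' i with h | h
      · subst h; rw [Function.update_self]; exact ht
      · rw [Function.update_of_ne h]; exact hr i'
    have h1 := hmin (Function.update r i t) s hpos hs
    have h2 : F A r s = c * (r i) - Real.log (r i)
        + ((∑ i' ∈ Finset.univ.erase i, ∑ j, A i' j * r i' * s j)
           - (∑ i' ∈ Finset.univ.erase i, Real.log (r i')) - ∑ j, Real.log (s j)) := by
      conv_lhs => rw [← Function.update_eq_self i r]
      rw [F_update]
    rw [F_update] at h1
    rw [h2] at h1
    linarith
  have h1 := local_min_log c (r i) (hr i) key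
  have h2 : ∑ j, A i j * r i * s j = r i * c := by
    rw [hc, Finset.mul_sum]
    exact Finset.sum_congr rfl fun j _ => by ring
  rw [h2, mul_comm]
  exact h1

lemma F_transpose (A : Matrix (Fin n) (Fin n) ℝ) (r s : Fin n → ℝ) :
    F Aᵀ s r = F A r s := by
  unfold F
  have h : ∑ i, ∑ j, Aᵀ i j * s i * r j = ∑ i, ∑ j, A i j * r i * s j := by
    rw [Finset.sum_comm]
    exact Finset.sum_congr rfl fun i _ => Finset.sum_congr rfl fun j _ => by
      rw [Matrix.transpose_apply]; ring
  rw [h]; ring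

/-- Elementary inequality: `1 + log m ≤ m x - log x` for positive `m, x`. -/
lemma gamma_le (m x : ℝ) (hm : 0 < m) (hx : 0 < x) :
    1 + Real.log m ≤ m * x - Real.log x := by
  have h := Real.log_le_sub_one_of_pos (mul_pos hm hx)
  rw [Real.log_mul hm.ne' hx.ne'] at h
  linarith

/-- Upper bound from `m*x - log x ≤ C'`. -/
lemma upper_bound_of (m x C' : ℝ) (hm : 0 < m) (hx : 0 < x)
    (h : m * x - Real.log x ≤ C') : x ≤ ((max C' 0 + 2) / m + 1) ^ 2 := by
  set u := Real.sqrt x with hu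
  have hu0 : 0 < u := Real.sqrt_pos.mpr hx
  have hux : u ^ 2 = x := Real.sq_sqrt hx.le
  have hlog : Real.log x = 2 * Real.log u := by
    rw [← hux, Real.log_pow]; push_cast; ring
  have hlogu : Real.log u ≤ u - 1 := Real.log_le_sub_one_of_pos hu0
  have hq : m * u ^ 2 - 2 * u ≤ C' := by
    rw [hlog, ← hux] at h; linarith
  set B := (max C' 0 + 2) / m + 1 with hB
  have hpos : 0 ≤ (max C' 0 + 2) / m := by positivity
  have hB1 : 1 ≤ B := by rw [hB]; linarith
  have hmB : m * B = max C' 0 + 2 + m := by rw [hB]; field_simp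
  have hC0 : C' ≤ max C' 0 := le_max_left _ _
  have huB : u ≤ B := by
    by_contra hcon
    push_neg at hcon
    have e1 : max C' 0 + 2 + m < m * u := by
      rw [← hmB]; exact (mul_lt_mul_iff_right₀ hm).mpr hcon
    have e2 : (1 : ℝ) ≤ u := le_trans hB1 hcon.le
    have hmax0 : (0 : ℝ) ≤ max C' 0 := le_max_right _ _
    have e3 : 0 ≤ (u - 1) * (m * u - 2) :=
      mul_nonneg (by linarith) (by linarith)
    nlinarith
  calc x = u ^ 2 := hux.symm
    _ ≤ B ^ 2 := pow_le_pow_left₀ hu0.le huB 2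

/-- Coercivity: on a sublevel set of `F` with normalized `r`, everything is bounded. -/
lemma coercive (A : Matrix (Fin n) (Fin n) ℝ) (m C : ℝ) (hm : 0 < m)
    (hmA : ∀ i j, m ≤ A i j)
    (r s : Fin n → ℝ) (hr : ∀ i, 0 < r i) (hs : ∀ j, 0 < s j)
    (hr1 : ∀ i, r i ≤ 1) (i0 : Fin n) (hi0 : r i0 = 1)
    (hF : F A r s ≤ C) :
    (∀ i, Real.exp (n * (1 + Real.log m) - C) ≤ r i) ∧
    (∀ j, Real.exp ((n - 1) * (1 + Real.log m) - C) ≤ s j ∧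
          s j ≤ ((max (C - (n - 1) * (1 + Real.log m)) 0 + 2) / m + 1) ^ 2) := by
  set γ := 1 + Real.log m with hγ
  have hn : 0 < n := i0.pos
  -- the main inequality: ∑_j (m s_j - log s_j) + ∑_i (-log r_i) ≤ C
  have hmain : (∑ j, (m * s j - Real.log (s j))) + (∑ i, -Real.log (r i)) ≤ C := by
    have hT : ∑ j, m * s j ≤ ∑ i, ∑ j, A i j * r i * s j := by
      have h1 : ∑ j, m * s j ≤ ∑ j, A i0 j * r i0 * s j := by
        apply Finset.sum_le_sum
        intro j _
        rw [hi0, mul_one]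
        exact mul_le_mul_of_nonneg_right (hmA i0 j) (hs j).le
      have h2 : ∑ j, A i0 j * r i0 * s j ≤ ∑ i, ∑ j, A i j * r i * s j := by
        apply Finset.single_le_sum (f := fun i => ∑ j, A i j * r i * s j)
          (fun i _ => Finset.sum_nonneg fun j _ =>
            mul_nonneg (mul_nonneg ((hm.trans_le (hmA i j)).le) (hr i).le) (hs j).le)
          (Finset.mem_univ i0)
      linarith
    have hFr : F A r s = (∑ i, ∑ j, A i j * r i * s j)
        - (∑ i, Real.log (r i)) - (∑ j, Real.log (s j)) := rfl
    have e1 : ∑ j, (m * s j - Real.log (s j)) = (∑ j, m * s j) - ∑ j, Real.log (s j) :=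
      Finset.sum_sub_distrib _ _
    have e2 : ∑ i, -Real.log (r i) = -∑ i, Real.log (r i) := by
      rw [Finset.sum_neg_distrib]
    rw [e1, e2]
    linarith
  have hγle : ∀ j, γ ≤ m * s j - Real.log (s j) := fun j => gamma_le m (s j) hm (hs j)
  have hlogr : ∀ i, 0 ≤ -Real.log (r i) := fun i => by
    have := Real.log_nonpos (hr i).le (hr1 i); linarith
  have hsumr : 0 ≤ ∑ i, -Real.log (r i) := Finset.sum_nonneg fun i _ => hlogr i
  constructor
  · intro i
    -- -log r i ≤ C - n γ
    have h1 : (n : ℝ) * γ ≤ ∑ j, (m * s j - Real.log (s j)) := by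
      have := Finset.card_nsmul_le_sum Finset.univ (fun j => m * s j - Real.log (s j)) γ
        (fun j _ => hγle j)
      simpa [nsmul_eq_mul] using this
    have h2 : -Real.log (r i) ≤ ∑ i', -Real.log (r i') :=
      Finset.single_le_sum (fun i' _ => hlogr i') (Finset.mem_univ i)
    have h3 : -Real.log (r i) ≤ C - n * γ := by linarith
    have h4 : (n : ℝ) * γ - C ≤ Real.log (r i) := by linarith
    calc Real.exp ((n : ℝ) * γ - C) ≤ Real.exp (Real.log (r i)) := Real.exp_le_exp.mpr h4
      _ = r i := Real.exp_log (hr i)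
  · intro j
    -- m s j - log s j ≤ C - (n-1) γ
    have hcard : ((Finset.univ.erase j).card : ℝ) = (n : ℝ) - 1 := by
      rw [Finset.card_erase_of_mem (Finset.mem_univ j)]
      simp [Finset.card_univ]
      rw [Nat.cast_sub hn]
      simp
    have h1 : ((n : ℝ) - 1) * γ ≤ ∑ j' ∈ Finset.univ.erase j, (m * s j' - Real.log (s j')) := by
      have := Finset.card_nsmul_le_sum (Finset.univ.erase j)
        (fun j' => m * s j' - Real.log (s j')) γ (fun j' _ => hγle j')
      rw [nsmul_eq_mul, hcard] at this
      exact this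
    have h2 : (m * s j - Real.log (s j))
        + ∑ j' ∈ Finset.univ.erase j, (m * s j' - Real.log (s j'))
        = ∑ j', (m * s j' - Real.log (s j')) := by
      rw [add_comm]
      exact Finset.sum_erase_add _ _ (Finset.mem_univ j)
    have h3 : m * s j - Real.log (s j) ≤ C - ((n : ℝ) - 1) * γ := by linarith
    constructor
    · have h4 : ((n : ℝ) - 1) * γ - C ≤ Real.log (s j) := by
        nlinarith [mul_pos hm (hs j)]
      calc Real.exp (((n : ℝ) - 1) * γ - C) ≤ Real.exp (Real.log (s j)) :=
            Real.exp_le_exp.mpr h4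
        _ = s j := Real.exp_log (hs j)
    · exact upper_bound_of m (s j) _ hm (hs j) h3

/-- Rescaling to normalize `r` so that its max is 1, keeping `F` fixed. -/
lemma rescale (A : Matrix (Fin n) (Fin n) ℝ) (hn : 0 < n) (r s : Fin n → ℝ)
    (hr : ∀ i, 0 < r i) (hs : ∀ j, 0 < s j) :
    ∃ r' s' : Fin n → ℝ, (∀ i, 0 < r' i) ∧ (∀ j, 0 < s' j) ∧ (∀ i, r' i ≤ 1) ∧
      (∃ i0, r' i0 = 1) ∧ F A r' s' = F A r s := by
  obtain ⟨i0, _, hmax⟩ := Finset.exists_max_image Finset.univ r ⟨⟨0, hn⟩, Finset.mem_univ _⟩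
  set M := r i0 with hM
  have hM0 : 0 < M := hr i0
  refine ⟨fun i => r i / M, fun j => M * s j, fun i => div_pos (hr i) hM0,
    fun j => mul_pos hM0 (hs j),
    fun i => div_le_one_of_le₀ (hmax i (Finset.mem_univ i)) hM0.le,
    ⟨i0, div_self hM0.ne'⟩, ?_⟩
  unfold F
  have hT : ∑ i, ∑ j, A i j * (r i / M) * (M * s j) = ∑ i, ∑ j, A i j * r i * s j := by
    refine Finset.sum_congr rfl fun i _ => Finset.sum_congr rfl fun j _ => ?_
    field_simp
  have hLr : ∑ i, Real.log (r i / M) = (∑ i, Real.log (r i)) - n * Real.log M := by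
    have : ∀ i : Fin n, Real.log (r i / M) = Real.log (r i) - Real.log M := fun i =>
      Real.log_div (hr i).ne' hM0.ne'
    simp only [this, Finset.sum_sub_distrib, Finset.sum_const, Finset.card_univ,
      Fintype.card_fin, nsmul_eq_mul]
  have hLs : ∑ j, Real.log (M * s j) = (n : ℝ) * Real.log M + ∑ j, Real.log (s j) := by
    have : ∀ j : Fin n, Real.log (M * s j) = Real.log M + Real.log (s j) := fun j =>
      Real.log_mul hM0.ne' (hs j).ne'
    simp only [this, Finset.sum_add_distrib, Finset.sum_const, Finset.card_univ,
      Fintype.card_fin, nsmul_eq_mul]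
  rw [hT, hLr, hLs]
  ring

/-- Uniqueness core: a positive doubly stochastic matrix rescaled to another doubly
stochastic matrix must have all scaling products equal to 1. -/
lemma uniq_core (hn : 0 < n) (B : Matrix (Fin n) (Fin n) ℝ) (hB : ∀ i j, 0 < B i j)
    (hBrow : ∀ i, ∑ j, B i j = 1) (hBcol : ∀ j, ∑ i, B i j = 1)
    (c d : Fin n → ℝ) (hc : ∀ i, 0 < c i) (hd : ∀ j, 0 < d j)
    (hrow : ∀ i, ∑ j, B i j * c i * d j = 1) (hcol : ∀ j, ∑ i, B i j * c i * d j = 1) :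
    ∀ i j, c i * d j = 1 := by
  obtain ⟨j0, _, hj0⟩ := Finset.exists_max_image Finset.univ d ⟨⟨0, hn⟩, Finset.mem_univ _⟩
  have h1 : ∀ i, 1 ≤ c i * d j0 := by
    intro i
    have hle : (1 : ℝ) ≤ ∑ j, B i j * c i * d j0 := by
      rw [← hrow i]
      exact Finset.sum_le_sum fun j _ =>
        mul_le_mul_of_nonneg_left (hj0 j (Finset.mem_univ j))
          (mul_pos (hB i j) (hc i)).le
    have heq : ∑ j, B i j * c i * d j0 = c i * d j0 := by
      have : ∑ j, B i j * c i * d j0 = (∑ j, B i j) * (c i * d j0) := by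
        rw [Finset.sum_mul]
        exact Finset.sum_congr rfl fun j _ => by ring
      rw [this, hBrow i, one_mul]
    linarith [heq ▸ hle]
  have h2 : ∀ i, c i * d j0 = 1 := by
    have hzero : ∑ i, B i j0 * (c i * d j0 - 1) = 0 := by
      have e : ∑ i, B i j0 * (c i * d j0 - 1)
          = (∑ i, B i j0 * c i * d j0) - ∑ i, B i j0 := by
        rw [← Finset.sum_sub_distrib]
        exact Finset.sum_congr rfl fun i _ => by ring
      rw [e, hcol j0, hBcol j0, sub_self]
    intro i
    have h3 := (Finset.sum_eq_zero_iff_of_nonneg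
      (fun i _ => mul_nonneg (hB i j0).le (by linarith [h1 i]))).mp hzero i (Finset.mem_univ i)
    have := mul_eq_zero.mp h3
    rcases this with h | h
    · exact absurd h (hB i j0).ne'
    · linarith
  intro i j
  have hdj : d j = d j0 := by
    have hcolj := hcol j
    have e : ∑ i, B i j * c i * d j = (d j / d j0) * ∑ i, B i j := by
      rw [Finset.mul_sum]
      refine Finset.sum_congr rfl fun i _ => ?_
      have hci : c i = 1 / d j0 := eq_one_div_of_mul_eq_one_right (mul_comm (c i) (d j0) ▸ h2 i)
      rw [hci]
      field_simp
    rw [e, hBcol j, mul_one] at hcolj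
    exact (div_eq_one_iff_eq (hd j0).ne').mp hcolj
  rw [hdj]
  exact h2 i

lemma F_contOn (A : Matrix (Fin n) (Fin n) ℝ) :
    ContinuousOn (fun p : (Fin n → ℝ) × (Fin n → ℝ) => F A p.1 p.2)
      {p | (∀ i, p.1 i ≠ 0) ∧ (∀ j, p.2 j ≠ 0)} := by
  intro p hp
  apply ContinuousAt.continuousWithinAt
  have h1 : Continuous fun p : (Fin n → ℝ) × (Fin n → ℝ) => ∑ i, ∑ j, A i j * p.1 i * p.2 j := by
    apply continuous_finset_sum; intro i _
    apply continuous_finset_sum; intro j _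
    exact (continuous_const.mul ((continuous_apply i).comp continuous_fst)).mul
      ((continuous_apply j).comp continuous_snd)
  have h2 : ContinuousAt (fun p : (Fin n → ℝ) × (Fin n → ℝ) => ∑ i, Real.log (p.1 i)) p := by
    apply tendsto_finset_sum
    intro i _
    exact ContinuousAt.log (((continuous_apply i).comp continuous_fst).continuousAt) (hp.1 i)
  have h3 : ContinuousAt (fun p : (Fin n → ℝ) × (Fin n → ℝ) => ∑ j, Real.log (p.2 j)) p := by
    apply tendsto_finset_sum
    intro j _
    exact ContinuousAt.log (((continuous_apply j).comp continuous_snd).continuousAt) (hp.2 j)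
  exact (h1.continuousAt.sub h2).sub h3

/-- Existence of a global minimizer of `F` over the positive orthant. -/
lemma exists_min (hn : 0 < n) (A : Matrix (Fin n) (Fin n) ℝ) (hA : ∀ i j, 0 < A i j) :
    ∃ r s : Fin n → ℝ, (∀ i, 0 < r i) ∧ (∀ j, 0 < s j) ∧
      ∀ r' s' : Fin n → ℝ, (∀ i, 0 < r' i) → (∀ j, 0 < s' j) → F A r s ≤ F A r' s' := by
  obtain ⟨m, hm, hmA⟩ : ∃ m, 0 < m ∧ ∀ i j, m ≤ A i j := by
    obtain ⟨p0, -, hp0⟩ := Finset.exists_min_image (Finset.univ : Finset (Fin n × Fin n))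
      (fun p => A p.1 p.2) ⟨(⟨0, hn⟩, ⟨0, hn⟩), Finset.mem_univ _⟩
    exact ⟨A p0.1 p0.2, hA _ _, fun i j => hp0 (i, j) (Finset.mem_univ _)⟩
  obtain ⟨C, h11⟩ : ∃ C, F A (fun _ => 1) (fun _ => 1) = C := ⟨_, rfl⟩
  set γ := 1 + Real.log m with hγ
  set ar := min (Real.exp (n * γ - C)) 1 with har
  set as := min (Real.exp ((n - 1) * γ - C)) 1 with has
  set bs := max (((max (C - (n - 1) * γ) 0 + 2) / m + 1) ^ 2) 1 with hbs
  have har0 : 0 < ar := lt_min (Real.exp_pos _) one_pos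
  have has0 : 0 < as := lt_min (Real.exp_pos _) one_pos
  have hbs1 : (1 : ℝ) ≤ bs := le_max_right _ _
  set K : Set ((Fin n → ℝ) × (Fin n → ℝ)) :=
    Set.Icc ((fun _ => ar, fun _ => as)) ((fun _ => 1, fun _ => bs)) with hK
  have hone : ((fun _ => (1 : ℝ)), (fun _ => (1 : ℝ))) ∈ K := by
    rw [hK, Set.mem_Icc, Prod.le_def, Prod.le_def]
    exact ⟨⟨fun i => min_le_right _ _, fun j => min_le_right _ _⟩,
     ⟨fun i => le_refl (1 : ℝ), fun j => hbs1⟩⟩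
  have hcont : ContinuousOn (fun p : (Fin n → ℝ) × (Fin n → ℝ) => F A p.1 p.2) K := by
    apply (F_contOn A).mono
    intro p hp
    exact ⟨fun i => (lt_of_lt_of_le har0 (hp.1.1 i)).ne',
           fun j => (lt_of_lt_of_le has0 (hp.1.2 j)).ne'⟩
  obtain ⟨q, hqK, hq'⟩ := isCompact_Icc.exists_isMinOn ⟨_, hone⟩ hcont
  have hq : ∀ x : (Fin n → ℝ) × (Fin n → ℝ), x ∈ K → F A q.1 q.2 ≤ F A x.1 x.2 :=
    fun x hx => isMinOn_iff.mp hq' x hx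
  have hq1 : ∀ i, 0 < q.1 i := fun i => lt_of_lt_of_le har0 (hqK.1.1 i)
  have hq2 : ∀ j, 0 < q.2 j := fun j => lt_of_lt_of_le has0 (hqK.1.2 j)
  refine ⟨q.1, q.2, hq1, hq2, ?_⟩
  intro r' s' hr' hs'
  by_cases hCle : F A r' s' ≤ C
  · obtain ⟨r'', s'', hr'', hs'', hle1, ⟨i0, hi0⟩, hFeq⟩ := rescale A hn r' s' hr' hs'
    have hF'' : F A r'' s'' ≤ C := by rw [hFeq]; exact hCle
    obtain ⟨hrb, hsb⟩ := coercive A m C hm hmA r'' s'' hr'' hs'' hle1 i0 hi0 hF''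
    have hmem : (r'', s'') ∈ K := by
      rw [hK, Set.mem_Icc, Prod.le_def, Prod.le_def]
      refine ⟨⟨fun i => ?_, fun j => ?_⟩, fun i => ?_, fun j => ?_⟩
      · exact le_trans (min_le_left _ _) (hrb i)
      · exact le_trans (min_le_left _ _) (hsb j).1
      · exact hle1 i
      · exact le_trans (hsb j).2 (le_max_left _ _)
    calc F A q.1 q.2 ≤ F A r'' s'' := hq (r'', s'') hmem
      _ = F A r' s' := hFeq
  · push_neg at hCle
    have h2 : F A q.1 q.2 ≤ C := by
      have h3 := hq _ hone
      rw [← h11]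
      exact h3
    linarith

lemma cols_eq_one (A : Matrix (Fin n) (Fin n) ℝ) (r s : Fin n → ℝ)
    (hr : ∀ i, 0 < r i) (hs : ∀ j, 0 < s j)
    (hmin : ∀ r' s', (∀ i, 0 < r' i) → (∀ j, 0 < s' j) → F A r s ≤ F A r' s') :
    ∀ j, ∑ i, A i j * r i * s j = 1 := by
  intro j
  have hmin' : ∀ r' s', (∀ i, 0 < r' i) → (∀ j, 0 < s' j) → F Aᵀ s r ≤ F Aᵀ r' s' := by
    intro r' s' h1 h2
    rw [F_transpose A r s, F_transpose A s' r']
    exact hmin s' r' h2 h1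
  have h := rows_eq_one Aᵀ s r hs hr hmin' j
  rw [← h]
  exact Finset.sum_congr rfl fun i _ => by rw [Matrix.transpose_apply]; ring

end MB

/-- A matrix is doubly stochastic if all entries are nonnegative and every row and every
column sums to one. -/
def IsDoublyStochastic {n : ℕ} (A : Matrix (Fin n) (Fin n) ℝ) : Prop :=
  (∀ i j, 0 ≤ A i j) ∧ (∀ i, ∑ j, A i j = 1) ∧ (∀ j, ∑ i, A i j = 1)

/-- (Existence and uniqueness of matrix balancing for positive matrices) For a matrix `A`
with all entries strictly positive, there exist strictly positive vectors `r, s` such that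
the matrix `A'` with `a'_{ij} = a_{ij} r_i s_j` is doubly stochastic, and the doubly
stochastic matrix obtained this way is unique. -/
theorem matrix_balancing_exists_unique {n : ℕ} (A : Matrix (Fin n) (Fin n) ℝ)
    (hA : ∀ i j, 0 < A i j) :
    ∃ r s : Fin n → ℝ, (∀ i, 0 < r i) ∧ (∀ j, 0 < s j) ∧
      IsDoublyStochastic (Matrix.of fun i j => A i j * r i * s j) ∧
      ∀ r' s' : Fin n → ℝ, (∀ i, 0 < r' i) → (∀ j, 0 < s' j) →
        IsDoublyStochastic (Matrix.of fun i j => A i j * r' i * s' j) →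
        (Matrix.of fun i j => A i j * r' i * s' j)
          = (Matrix.of fun i j => A i j * r i * s j) := by
  rcases Nat.eq_zero_or_pos n with hn | hn
  · subst hn
    refine ⟨fun _ => 1, fun _ => 1, fun i => one_pos, fun j => one_pos,
      ⟨fun i _ => i.elim0, fun i => i.elim0, fun j => j.elim0⟩, ?_⟩
    intro r' s' _ _ _
    ext i j
    exact i.elim0
  · obtain ⟨r, s, hr, hs, hmin⟩ := MB.exists_min hn A hA
    have hrow := MB.rows_eq_one A r s hr hs hmin
    have hcol := MB.cols_eq_one A r s hr hs hmin
    refine ⟨r, s, hr, hs,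
      ⟨fun i j => (mul_pos (mul_pos (hA i j) (hr i)) (hs j)).le,
       fun i => by simpa [Matrix.of_apply] using hrow i,
       fun j => by simpa [Matrix.of_apply] using hcol j⟩, ?_⟩
    intro r' s' hr' hs' hDS
    obtain ⟨-, hrow2, hcol2⟩ := hDS
    simp only [Matrix.of_apply] at hrow2 hcol2
    have hkey := MB.uniq_core hn (Matrix.of fun i j => A i j * r i * s j)
      (fun i j => mul_pos (mul_pos (hA i j) (hr i)) (hs j))
      (fun i => by simpa [Matrix.of_apply] using hrow i)
      (fun j => by simpa [Matrix.of_apply] using hcol j)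
      (fun i => r' i / r i) (fun j => s' j / s j)
      (fun i => div_pos (hr' i) (hr i)) (fun j => div_pos (hs' j) (hs j))
      (fun i => by
        rw [← hrow2 i]
        refine Finset.sum_congr rfl fun j _ => ?_
        simp only [Matrix.of_apply]
        field_simp [(hr i).ne', (hs j).ne'])
      (fun j => by
        rw [← hcol2 j]
        refine Finset.sum_congr rfl fun i _ => ?_
        simp only [Matrix.of_apply]
        field_simp [(hr i).ne', (hs j).ne'])
    ext i j
    simp only [Matrix.of_apply]
    have h := hkey i j
    rw [div_mul_div_comm, div_eq_one_iff_eq (mul_ne_zero (hr i).ne' (hs j).ne')] at h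
    linear_combination (A i j) * h
end
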